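/- If P is an orthogonal projection on a complex Hilbert space and Σ is a bounded self-adjoint operator with -P ≤ Σ ≤ P and Σ = PΣP, then for any 0 ≤ a < 1/4 the operator inequality 2^(1-4a) P ≤ (P + Σ)^(1-4a) + (P - Σ)^(1-4a) ≤ 2P holds (functional calculus taken on the range of P with convention 0^c = 0). -/

import Mathlib

open RCLike ContinuousLinearMap
open scoped InnerProductSpace

section Aux

variable {H : Type*} [NormedAddCommGroup H] [InnerProductSpace ℂ H] [CompleteSpace H]

lemma aux_sym {T : H →L[ℂ] H} (h : IsSelfAdjoint T) (x y : H) :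
    ⟪T x, y⟫_ℂ = ⟪x, T y⟫_ℂ := by
  conv_lhs => rw [← h.adjoint_eq]
  exact ContinuousLinearMap.adjoint_inner_left T y x

lemma aux_inner_mono {X Y : H →L[ℂ] H} (h : X ≤ Y) (v : H) :
    re ⟪X v, v⟫_ℂ ≤ re ⟪Y v, v⟫_ℂ := by
  have h' := (ContinuousLinearMap.le_def X Y).mp h
  have h2 := h'.re_inner_nonneg_left v
  simp only [ContinuousLinearMap.sub_apply, inner_sub_left, map_sub,
    ContinuousLinearMap.reApplyInnerSelf_apply] at h2 ⊢
  linarith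

lemma aux_smul_inner (r : ℝ) (T : H →L[ℂ] H) (v : H) :
    re ⟪(r • T) v, v⟫_ℂ = r * re ⟪T v, v⟫_ℂ := by
  rw [ContinuousLinearMap.smul_apply, real_smul_eq_coe_smul (K := ℂ), inner_smul_left]
  simp [RCLike.conj_ofReal]

lemma aux_one_inner (v : H) : re ⟪(1 : H →L[ℂ] H) v, v⟫_ℂ = ‖v‖ ^ 2 := by
  rw [ContinuousLinearMap.one_apply, inner_self_eq_norm_sq]

lemma aux_proj_pos {T : H →L[ℂ] H} (h1 : IsIdempotentElem T) (h2 : IsSelfAdjoint T) :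
    T.IsPositive := by
  refine ⟨isSelfAdjoint_iff_isSymmetric.mp h2, fun x => ?_⟩
  have hx : T x = T (T x) := by
    conv_lhs => rw [← h1.eq]
    rfl
  rw [ContinuousLinearMap.reApplyInnerSelf_apply, hx, aux_sym h2 (T x) x,
    inner_self_eq_norm_sq]
  positivity

/-- Kernel lemma: if `A v = 0` and `g 0 = 0`, then `cfc g A v = 0`. -/
lemma aux_ker_cfc {A : H →L[ℂ] H} (hA : IsSelfAdjoint A) {g : ℝ → ℝ}
    (hg : Continuous g) (hg0 : g 0 = 0) {v : H} (hv : A v = 0) : cfc g A v = 0 := by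
  by_cases hv0 : v = 0
  · simp [hv0]
  have : Nontrivial H := by
    by_contra hcon
    rw [not_nontrivial_iff_subsingleton] at hcon
    exact hv0 (Subsingleton.elim v 0)
  set T := cfc g A with hT
  have hTsa : IsSelfAdjoint T := cfc_predicate g A
  have key : ∀ ε > (0:ℝ), ‖T v‖ ^ 2 ≤ ε * ‖v‖ ^ 2 := by
    intro ε hε
    obtain ⟨δ, hδ, hδ'⟩ := Metric.continuousAt_iff.mp ((hg.mul hg).continuousAt (x := 0)) ε hε
    obtain ⟨M, hM⟩ : ∃ M, ∀ x ∈ Set.Icc (-‖A‖) ‖A‖, g x * g x ≤ M := by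
      obtain ⟨M, hM⟩ := (isCompact_Icc.image_of_continuousOn
        ((hg.mul hg).continuousOn (s := Set.Icc (-‖A‖) ‖A‖))).bddAbove
      exact ⟨M, fun x hx => hM ⟨x, hx, rfl⟩⟩
    have hM0 : 0 ≤ M := by
      have h00 := hM 0 ⟨neg_nonpos.mpr (norm_nonneg A), norm_nonneg A⟩
      rw [hg0, zero_mul] at h00
      exact h00
    set C := M / δ ^ 2 with hC
    have hC0 : 0 ≤ C := div_nonneg hM0 (sq_nonneg δ)
    have hspec : ∀ x ∈ spectrum ℝ A, g x * g x ≤ ε + C * x ^ 2 := by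
      intro x hx
      by_cases hxδ : |x| < δ
      · have h1 : dist (g x * g x) (g 0 * g 0) < ε := hδ' (by simpa [Real.dist_eq] using hxδ)
        rw [hg0, mul_zero, Real.dist_eq, sub_zero] at h1
        have h2 := le_abs_self (g x * g x)
        nlinarith [sq_nonneg x]
      · push_neg at hxδ
        have hxA : |x| ≤ ‖A‖ := by
          have := spectrum.norm_le_norm_of_mem hx
          rwa [Real.norm_eq_abs] at this
        have h1 : g x * g x ≤ M := hM x (abs_le.mp hxA)
        have h2 : δ ^ 2 ≤ x ^ 2 := by
          rw [← sq_abs x]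
          exact pow_le_pow_left₀ hδ.le hxδ 2
        have h3 : M ≤ C * x ^ 2 := by
          have h4 : C * δ ^ 2 = M := by
            rw [hC, div_mul_cancel₀ M (pow_ne_zero 2 hδ.ne')]
          nlinarith
        linarith
    have h1 : T * T ≤ ε • (1 : H →L[ℂ] H) + C • A ^ 2 := by
      have e1 : T * T = cfc (fun x => g x * g x) A := by
        rw [cfc_mul _ _ A (hg.continuousOn) (hg.continuousOn)]
      have e2 : cfc (fun x : ℝ => ε + C * x ^ 2) A = ε • (1 : H →L[ℂ] H) + C • A ^ 2 := by
        rw [cfc_const_add ε (fun x : ℝ => C * x ^ 2) A (by fun_prop)]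
        rw [cfc_const_mul C (fun x : ℝ => x ^ 2) A (by fun_prop)]
        rw [cfc_pow_id A 2, Algebra.algebraMap_eq_smul_one]
      rw [e1, ← e2]
      exact cfc_mono hspec (by fun_prop) (by fun_prop)
    have h2 := aux_inner_mono h1 v
    have lhs : re ⟪(T * T) v, v⟫_ℂ = ‖T v‖ ^ 2 := by
      rw [ContinuousLinearMap.mul_apply, aux_sym hTsa (T v) v]
      exact inner_self_eq_norm_sq (𝕜 := ℂ) (T v)
    have rhs : re ⟪(ε • (1 : H →L[ℂ] H) + C • A ^ 2) v, v⟫_ℂ = ε * ‖v‖ ^ 2 := by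
      have hA2 : (A ^ 2) v = 0 := by
        rw [pow_two, ContinuousLinearMap.mul_apply, hv, map_zero]
      rw [ContinuousLinearMap.add_apply, inner_add_left, map_add,
        aux_smul_inner ε 1 v, aux_one_inner v, aux_smul_inner C (A ^ 2) v, hA2]
      simp
    rw [lhs, rhs] at h2
    exact h2
  have hv2 : 0 < ‖v‖ ^ 2 := pow_pos (norm_pos_iff.mpr hv0) 2
  have hle : ‖T v‖ ^ 2 ≤ 0 := by
    by_contra h
    push_neg at h
    have h5 := key (‖T v‖ ^ 2 / (2 * ‖v‖ ^ 2)) (by positivity)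
    have h6 : ‖T v‖ ^ 2 / (2 * ‖v‖ ^ 2) * ‖v‖ ^ 2 = ‖T v‖ ^ 2 / 2 := by
      field_simp
    rw [h6] at h5
    linarith
  have : ‖T v‖ = 0 := by nlinarith [norm_nonneg (T v)]
  simpa using this

end Aux

section Scalar

/-- Supporting line for concave `x ^ c` at `τ > 0`. -/
lemma scal_bern {c : ℝ} (hc0 : 0 < c) (hc1 : c ≤ 1) {τ x : ℝ} (hτ : 0 < τ) (hx : 0 ≤ x) :
    x ^ c ≤ (1 - c) * τ ^ c + (c * τ ^ (c - 1)) * x := by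
  have hs : -1 ≤ x / τ - 1 := by
    have : 0 ≤ x / τ := div_nonneg hx hτ.le
    linarith
  have hb := rpow_one_add_le_one_add_mul_self hs hc0.le hc1
  have h1 : (x / τ) ^ c ≤ 1 + c * (x / τ - 1) := by
    have e : (1 : ℝ) + (x / τ - 1) = x / τ := by ring
    rwa [e] at hb
  have hτc : (0:ℝ) < τ ^ c := Real.rpow_pos_of_pos hτ c
  have h2 : x ^ c = τ ^ c * (x / τ) ^ c := by
    rw [Real.div_rpow hx hτ.le]
    field_simp
  have h3 : τ ^ (c - 1) = τ ^ c / τ := by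
    rw [Real.rpow_sub hτ, Real.rpow_one]
  rw [h2, h3]
  calc τ ^ c * (x / τ) ^ c ≤ τ ^ c * (1 + c * (x / τ - 1)) := by
        exact mul_le_mul_of_nonneg_left h1 hτc.le
    _ = (1 - c) * τ ^ c + (c * (τ ^ c / τ)) * x := by
        field_simp
        ring
    _ ≤ (1 - c) * τ ^ c + (c * (τ ^ c / τ)) * x := le_rfl

/-- Lower scalar bound: `2 ^ (c - 1) * x ≤ x ^ c` on `[0, 2]`. -/
lemma scal_low {c : ℝ} (hc0 : 0 < c) (hc1 : c ≤ 1) {x : ℝ} (hx0 : 0 ≤ x) (hx2 : x ≤ 2) :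
    (2:ℝ) ^ (c - 1) * x ≤ x ^ c := by
  rcases eq_or_lt_of_le hx0 with h | h
  · rw [← h, mul_zero, Real.zero_rpow hc0.ne']
  · have h1 : (2:ℝ) ^ (c - 1) ≤ x ^ (c - 1) :=
      Real.rpow_le_rpow_of_nonpos h hx2 (by linarith)
    have h2 : x ^ (c - 1) * x = x ^ c := by
      rw [← Real.rpow_add_one h.ne' (c - 1)]
      norm_num
    calc (2:ℝ) ^ (c - 1) * x ≤ x ^ (c - 1) * x := by
          exact mul_le_mul_of_nonneg_right h1 h.le
      _ = x ^ c := h2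

end Scalar
set_option synthInstance.maxHeartbeats 200000 in
set_option maxHeartbeats 1000000 in
theorem stmt0 {H : Type*} [NormedAddCommGroup H] [InnerProductSpace ℂ H] [CompleteSpace H]
    (P Sg : H →L[ℂ] H) (hPproj : IsIdempotentElem P) (hPsa : IsSelfAdjoint P)
    (hSgsa : IsSelfAdjoint Sg) (hpos : (P + Sg).IsPositive) (hpos' : (P - Sg).IsPositive)
    (hloc : P * Sg * P = Sg) (a : ℝ) (ha : 0 ≤ a) (ha' : a < 1/4) :
    (((2:ℝ) ^ (1 - 4*a)) • P ≤
        cfc (fun x : ℝ => x ^ (1 - 4*a)) (P + Sg) + cfc (fun x : ℝ => x ^ (1 - 4*a)) (P - Sg))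
    ∧ (cfc (fun x : ℝ => x ^ (1 - 4*a)) (P + Sg) + cfc (fun x : ℝ => x ^ (1 - 4*a)) (P - Sg)
        ≤ (2:ℝ) • P) := by
  set c : ℝ := 1 - 4*a with hcdef
  have hc0 : (0:ℝ) < c := by rw [hcdef]; linarith
  have hc1 : c ≤ 1 := by rw [hcdef]; linarith
  set f : ℝ → ℝ := fun x => x ^ c with hfdef
  have hfc : Continuous f := Real.continuous_rpow_const hc0.le
  have hf0 : f 0 = 0 := Real.zero_rpow hc0.ne'
  set A : H →L[ℂ] H := P + Sg with hAdef
  set B : H →L[ℂ] H := P - Sg with hBdef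
  have hAsa : IsSelfAdjoint A := hpos.isSelfAdjoint
  have hBsa : IsSelfAdjoint B := hpos'.isSelfAdjoint
  have hQpos : ((1 : H →L[ℂ] H) - P).IsPositive :=
    aux_proj_pos hPproj.one_sub (((IsSelfAdjoint.one (R := H →L[ℂ] H)).sub hPsa))
  have hAB : A + B = (2:ℝ) • P := by
    rw [hAdef, hBdef, two_smul]
    abel
  -- spectrum bounds
  have hbound : ∀ (X : H →L[ℂ] H), X.IsPositive →
      ((2:ℝ) • (1 : H →L[ℂ] H) - X).IsPositive → spectrum ℝ X ⊆ Set.Icc 0 2 := by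
    intro X hX hX2 x hx
    refine ⟨spectrum_nonneg_of_nonneg ((ContinuousLinearMap.nonneg_iff_isPositive X).mpr hX) hx, ?_⟩
    have h2 : X ≤ algebraMap ℝ _ (2:ℝ) := by
      rw [Algebra.algebraMap_eq_smul_one, ContinuousLinearMap.le_def]
      exact hX2
    exact le_algebraMap_iff_spectrum_le (ha := hX.isSelfAdjoint) |>.mp h2 x hx
  have hspecA : spectrum ℝ A ⊆ Set.Icc 0 2 := by
    refine hbound A hpos ?_
    have e : (2:ℝ) • (1 : H →L[ℂ] H) - A
        = (((1 : H →L[ℂ] H) - P) + ((1 : H →L[ℂ] H) - P)) + B := by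
      rw [hAdef, hBdef, two_smul]
      abel
    rw [e]
    exact (hQpos.add hQpos).add hpos'
  have hspecB : spectrum ℝ B ⊆ Set.Icc 0 2 := by
    refine hbound B hpos' ?_
    have e : (2:ℝ) • (1 : H →L[ℂ] H) - B
        = (((1 : H →L[ℂ] H) - P) + ((1 : H →L[ℂ] H) - P)) + A := by
      rw [hAdef, hBdef, two_smul]
      abel
    rw [e]
    exact (hQpos.add hQpos).add hpos
  constructor
  · -- lower bound
    have hlow : ∀ (X : H →L[ℂ] H), IsSelfAdjoint X → spectrum ℝ X ⊆ Set.Icc 0 2 →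
        ((2:ℝ) ^ (c - 1)) • X ≤ cfc f X := by
      intro X hX hσ
      have h := cfc_mono (f := fun x : ℝ => (2:ℝ) ^ (c-1) * x) (g := f) (a := X)
        (fun x hx => scal_low hc0 hc1 (hσ hx).1 (hσ hx).2) (by fun_prop) hfc.continuousOn
      rwa [cfc_const_mul_id _ X hX] at h
    have hsum := add_le_add (hlow A hAsa hspecA) (hlow B hBsa hspecB)
    have h2c : (2:ℝ) ^ c = (2:ℝ) ^ (c - 1) + (2:ℝ) ^ (c - 1) := by
      rw [show c = (c - 1) + 1 by ring, Real.rpow_add_one (by norm_num : (2:ℝ) ≠ 0) (c - 1)]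
      ring
    have e : ((2:ℝ) ^ (c - 1)) • A + ((2:ℝ) ^ (c - 1)) • B = ((2:ℝ) ^ c) • P := by
      have e' : A + B = P + P := by rw [hAdef, hBdef]; abel
      rw [← smul_add, e', smul_add, ← add_smul, ← h2c]
    rwa [e] at hsum
  · -- upper bound
    rw [ContinuousLinearMap.le_def]
    have hDAsa : IsSelfAdjoint (cfc f A) := cfc_predicate f A
    have hDBsa : IsSelfAdjoint (cfc f B) := cfc_predicate f B
    set E : H →L[ℂ] H := (2:ℝ) • P - (cfc f A + cfc f B) with hEdef
    have hEsa : IsSelfAdjoint E := by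
      rw [hEdef]
      have h2P : IsSelfAdjoint ((2:ℝ) • P) := by
        rw [two_smul]
        exact hPsa.add hPsa
      exact h2P.sub (hDAsa.add hDBsa)
    refine ⟨isSelfAdjoint_iff_isSymmetric.mp hEsa, fun x => ?_⟩
    rw [ContinuousLinearMap.reApplyInnerSelf_apply]
    set u : H := P x with hu
    set v : H := x - P x with hv
    have hPP : ∀ y, P (P y) = P y := fun y => by
      conv_rhs => rw [← hPproj.eq]
      rfl
    have hPu : P u = u := hPP x
    have hPv : P v = 0 := by
      rw [hv, map_sub, hPP]
      exact sub_self _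
    have hSv : Sg v = 0 := by
      have h1 : Sg v = P (Sg (P v)) := by
        conv_lhs => rw [← hloc]
        rfl
      rw [h1, hPv, map_zero, map_zero]
    have hAv : A v = 0 := by
      rw [hAdef, ContinuousLinearMap.add_apply, hPv, hSv, add_zero]
    have hBv : B v = 0 := by
      rw [hBdef, ContinuousLinearMap.sub_apply, hPv, hSv, sub_zero]
    have hDAv : cfc f A v = 0 := aux_ker_cfc hAsa hfc hf0 hAv
    have hDBv : cfc f B v = 0 := aux_ker_cfc hBsa hfc hf0 hBv
    have hEv : E v = 0 := by
      rw [hEdef, ContinuousLinearMap.sub_apply, ContinuousLinearMap.add_apply, hDAv, hDBv,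
        ContinuousLinearMap.smul_apply, hPv, smul_zero]
      simp
    have hxuv : x = u + v := by rw [hu, hv]; abel
    have hEx : E x = E u := by
      conv_lhs => rw [hxuv]
      rw [map_add, hEv, add_zero]
    have hsplit : re ⟪E x, x⟫_ℂ = re ⟪E u, u⟫_ℂ := by
      rw [hEx]
      conv_lhs => rw [hxuv]
      rw [inner_add_right, map_add, aux_sym hEsa u v, hEv, inner_zero_right, map_zero, add_zero]
    rw [hsplit]
    have hEu : re ⟪E u, u⟫_ℂ = 2 * ‖u‖^2 - (re ⟪cfc f A u, u⟫_ℂ + re ⟪cfc f B u, u⟫_ℂ) := by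
      rw [hEdef, ContinuousLinearMap.sub_apply, inner_sub_left, map_sub,
        ContinuousLinearMap.add_apply, inner_add_left, map_add,
        aux_smul_inner 2 P u, hPu, inner_self_eq_norm_sq]
    rw [hEu, sub_nonneg]
    by_cases hu0 : u = 0
    · simp [hu0]
    have hnu : (0:ℝ) < ‖u‖^2 := pow_pos (norm_pos_iff.mpr hu0) 2
    have key : ∀ (X : H →L[ℂ] H), IsSelfAdjoint X → spectrum ℝ X ⊆ Set.Icc 0 2 →
        ∀ r s : ℝ, (∀ y ∈ Set.Icc (0:ℝ) 2, y ^ c ≤ r + s * y) →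
        re ⟪cfc f X u, u⟫_ℂ ≤ r * ‖u‖^2 + s * re ⟪X u, u⟫_ℂ := by
      intro X hX hσ r s hrs
      have h1 : cfc f X ≤ r • (1 : H →L[ℂ] H) + s • X := by
        have h2 := cfc_mono (f := f) (g := fun y : ℝ => r + s * y) (a := X)
          (fun y hy => hrs y (hσ hy)) hfc.continuousOn (by fun_prop)
        rwa [cfc_const_add r (fun y : ℝ => s * y) X (by fun_prop),
          cfc_const_mul_id s X hX, Algebra.algebraMap_eq_smul_one] at h2
      have h3 := aux_inner_mono h1 u
      rwa [ContinuousLinearMap.add_apply, inner_add_left, map_add,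
        aux_smul_inner, aux_one_inner, aux_smul_inner] at h3
    have keyz : ∀ (X : H →L[ℂ] H), X.IsPositive →
        re ⟪X u, u⟫_ℂ = 0 → cfc f X u = 0 := by
      intro X hX h0
      have h0X : (0 : H →L[ℂ] H) ≤ X := (ContinuousLinearMap.nonneg_iff_isPositive X).mpr hX
      set S : H →L[ℂ] H := CFC.sqrt X with hS
      have hSnn : (0 : H →L[ℂ] H) ≤ S := CFC.sqrt_nonneg (a := X)
      have hSsa : IsSelfAdjoint S := IsSelfAdjoint.of_nonneg hSnn
      have hSS : ∀ y, S (S y) = X y := by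
        intro y
        have h1 : S * S = X := by
          rw [hS, ← pow_two]
          exact CFC.sq_sqrt (a := X) h0X
        conv_rhs => rw [← h1]
        rfl
      have h2 : re ⟪X u, u⟫_ℂ = ‖S u‖^2 := by
        conv_lhs => rw [← hSS u]
        rw [aux_sym hSsa (S u) u]
        exact inner_self_eq_norm_sq (𝕜 := ℂ) (S u)
      rw [h0] at h2
      have h3 : S u = 0 := by
        have h4 : ‖S u‖ = 0 := by nlinarith [norm_nonneg (S u)]
        simpa using h4
      have h4 : X u = 0 := by rw [← hSS u, h3, map_zero]
      exact aux_ker_cfc hX.isSelfAdjoint hfc hf0 h4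
    have keyc : ∀ (X : H →L[ℂ] H), IsSelfAdjoint X → spectrum ℝ X ⊆ Set.Icc 0 2 →
        re ⟪cfc f X u, u⟫_ℂ ≤ 2 * ‖u‖^2 := by
      intro X hX hσ
      have h := key X hX hσ ((2:ℝ)^c) 0 (fun y hy => by
        rw [zero_mul, add_zero]
        exact Real.rpow_le_rpow hy.1 hy.2 hc0.le)
      have h2 : (2:ℝ)^c ≤ 2 := by
        calc (2:ℝ)^c ≤ (2:ℝ)^(1:ℝ) := Real.rpow_le_rpow_of_exponent_le one_le_two hc1
          _ = 2 := Real.rpow_one 2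
      nlinarith [h, hnu]
    set t₁ : ℝ := re ⟪A u, u⟫_ℂ with ht1def
    set t₂ : ℝ := re ⟪B u, u⟫_ℂ with ht2def
    have ht1 : 0 ≤ t₁ := hpos.re_inner_nonneg_left u
    have ht2 : 0 ≤ t₂ := hpos'.re_inner_nonneg_left u
    have htsum : t₁ + t₂ = 2 * ‖u‖^2 := by
      have e0 : A + B = P + P := by rw [hAdef, hBdef]; abel
      have e' : A u + B u = u + u := by
        rw [← ContinuousLinearMap.add_apply, e0, ContinuousLinearMap.add_apply, hPu]
      rw [ht1def, ht2def, ← map_add, ← inner_add_left, e', inner_add_left, map_add,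
        inner_self_eq_norm_sq]
      ring
    rcases eq_or_lt_of_le ht1 with h1 | h1
    · have hz : cfc f A u = 0 := keyz A hpos h1.symm
      have hz' : re ⟪cfc f A u, u⟫_ℂ = 0 := by rw [hz, inner_zero_left, map_zero]
      have hb := keyc B hBsa hspecB
      linarith
    rcases eq_or_lt_of_le ht2 with h2 | h2
    · have hz : cfc f B u = 0 := keyz B hpos' h2.symm
      have hz' : re ⟪cfc f B u, u⟫_ℂ = 0 := by rw [hz, inner_zero_left, map_zero]
      have hb := keyc A hAsa hspecA
      linarith
    set τ₁ : ℝ := t₁ / ‖u‖^2 with hτ1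
    set τ₂ : ℝ := t₂ / ‖u‖^2 with hτ2
    have hτ1p : 0 < τ₁ := div_pos h1 hnu
    have hτ2p : 0 < τ₂ := div_pos h2 hnu
    have hτsum : τ₁ + τ₂ = 2 := by
      rw [hτ1, hτ2]
      field_simp
      linarith
    have ht1' : t₁ = τ₁ * ‖u‖^2 := by
      rw [hτ1]
      field_simp
    have ht2' : t₂ = τ₂ * ‖u‖^2 := by
      rw [hτ2]
      field_simp
    have hτc1 : τ₁^(c-1) * τ₁ = τ₁^c := by
      rw [← Real.rpow_add_one hτ1p.ne' (c-1)]
      norm_num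
    have hτc2 : τ₂^(c-1) * τ₂ = τ₂^c := by
      rw [← Real.rpow_add_one hτ2p.ne' (c-1)]
      norm_num
    have hA1 := key A hAsa hspecA ((1-c) * τ₁^c) (c * τ₁^(c-1))
      (fun y hy => scal_bern hc0 hc1 hτ1p hy.1)
    have hB1 := key B hBsa hspecB ((1-c) * τ₂^c) (c * τ₂^(c-1))
      (fun y hy => scal_bern hc0 hc1 hτ2p hy.1)
    have hA2 : re ⟪cfc f A u, u⟫_ℂ ≤ τ₁^c * ‖u‖^2 := by
      calc re ⟪cfc f A u, u⟫_ℂ ≤ (1-c) * τ₁^c * ‖u‖^2 + (c * τ₁^(c-1)) * t₁ := hA1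
        _ = τ₁^c * ‖u‖^2 + (c * ‖u‖^2) * (τ₁^(c-1) * τ₁ - τ₁^c) := by rw [ht1']; ring
        _ = τ₁^c * ‖u‖^2 := by rw [hτc1]; ring
    have hB2 : re ⟪cfc f B u, u⟫_ℂ ≤ τ₂^c * ‖u‖^2 := by
      calc re ⟪cfc f B u, u⟫_ℂ ≤ (1-c) * τ₂^c * ‖u‖^2 + (c * τ₂^(c-1)) * t₂ := hB1
        _ = τ₂^c * ‖u‖^2 + (c * ‖u‖^2) * (τ₂^(c-1) * τ₂ - τ₂^c) := by rw [ht2']; ring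
        _ = τ₂^c * ‖u‖^2 := by rw [hτc2]; ring
    have hsum2 : τ₁^c + τ₂^c ≤ 2 := by
      have b1 := scal_bern hc0 hc1 (one_pos) hτ1p.le
      have b2 := scal_bern hc0 hc1 (one_pos) hτ2p.le
      rw [Real.one_rpow, Real.one_rpow] at b1 b2
      nlinarith [hτsum]
    nlinarith [hA2, hB2, hsum2, hnu]
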